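/- (Multiplier response via the Lagrangian Hessian, eqs. (23)-(24)) Let D ⊆ ℝᴹ be open, let F : ℝⁿ → ℝ and c : ℝⁿ → ℝᴹ be twice continuously differentiable, let v* : D → ℝⁿ and Λ : D → ℝᴹ be continuously differentiable with c(v*(x)) = x and ∇F(v*(x)) = Σₘ Λₘ(x)·∇cᵐ(v*(x)) for all x ∈ D. Then for all x ∈ D and all i, j: ∂Λᵢ/∂xʲ(x) = Σₛ Σₖ (∂v*ˢ/∂xⁱ)(x) · [∂²F/∂vˢ∂vᵏ(v*(x)) − Σₘ Λₘ(x)·∂²cᵐ/∂vˢ∂vᵏ(v*(x))] · (∂v*ᵏ/∂xʲ)(x). -/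

import Mathlib

/-- Bilinear expansion of a continuous bilinear map on `Fin n → ℝ` in the standard basis. -/
lemma bexp {n : ℕ} {G : Type*} [NormedAddCommGroup G] [NormedSpace ℝ G]
    (T : (Fin n → ℝ) →L[ℝ] (Fin n → ℝ) →L[ℝ] G) (a b : Fin n → ℝ) :
    T a b = ∑ s, ∑ k, (a s * b k) • T (Pi.single s 1) (Pi.single k 1) := by
  have ha : a = ∑ s, a s • (Pi.single s (1:ℝ) : Fin n → ℝ) := by
    funext t
    simp [Finset.sum_apply, Pi.single_apply]
  have hb : b = ∑ k, b k • (Pi.single k (1:ℝ) : Fin n → ℝ) := by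
    funext t
    simp [Finset.sum_apply, Pi.single_apply]
  conv_lhs => rw [ha, hb]
  simp only [map_sum, map_smul, ContinuousLinearMap.sum_apply,
    ContinuousLinearMap.smul_apply, Finset.smul_sum, smul_smul]
  rw [Finset.sum_comm]
  exact Finset.sum_congr rfl fun s _ => Finset.sum_congr rfl fun k _ => by rw [mul_comm]

/-- Rearrangement of a double sum with a bracketed Hessian term. -/
lemma habc {n M : ℕ} (P Q : Fin n → ℝ) (Fe : Fin n → Fin n → ℝ)
    (Ce : Fin M → Fin n → Fin n → ℝ) (lam : Fin M → ℝ) :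
    (∑ s, ∑ k, (P s * Q k) * Fe s k) - ∑ m, lam m * (∑ s, ∑ k, (P s * Q k) * Ce m s k)
      = ∑ s, ∑ k, P s * (Fe s k - ∑ m, lam m * Ce m s k) * Q k := by
  have h1 : ∀ s k, P s * (Fe s k - ∑ m, lam m * Ce m s k) * Q k
      = (P s * Q k) * Fe s k - ∑ m, lam m * ((P s * Q k) * Ce m s k) := by
    intro s k
    have h : P s * (∑ m, lam m * Ce m s k) * Q k
        = ∑ m, lam m * ((P s * Q k) * Ce m s k) := by
      rw [Finset.mul_sum, Finset.sum_mul]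
      exact Finset.sum_congr rfl fun m _ => by ring
    calc P s * (Fe s k - ∑ m, lam m * Ce m s k) * Q k
        = P s * Fe s k * Q k - P s * (∑ m, lam m * Ce m s k) * Q k := by ring
      _ = (P s * Q k) * Fe s k - ∑ m, lam m * ((P s * Q k) * Ce m s k) := by rw [h]; ring
  have h2 : ∑ m, lam m * (∑ s, ∑ k, (P s * Q k) * Ce m s k)
      = ∑ s, ∑ k, ∑ m, lam m * ((P s * Q k) * Ce m s k) := by
    simp only [Finset.mul_sum]
    rw [Finset.sum_comm]
    exact Finset.sum_congr rfl fun s _ => Finset.sum_comm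
  rw [h2]
  rw [Finset.sum_congr rfl fun s _ => Finset.sum_congr rfl fun k _ => h1 s k]
  rw [← Finset.sum_sub_distrib]
  exact Finset.sum_congr rfl fun s _ => (Finset.sum_sub_distrib _ _).symm

theorem stmt_7 (n M : ℕ) (D : Set (Fin M → ℝ)) (hD : IsOpen D)
    (F : (Fin n → ℝ) → ℝ) (hF : ContDiff ℝ 2 F)
    (c : (Fin n → ℝ) → (Fin M → ℝ)) (hc : ContDiff ℝ 2 c)
    (vstar : (Fin M → ℝ) → (Fin n → ℝ)) (hv : ContDiffOn ℝ 1 vstar D)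
    (Λ : (Fin M → ℝ) → (Fin M → ℝ)) (hΛ : ContDiffOn ℝ 1 Λ D)
    (hcon : ∀ x ∈ D, c (vstar x) = x)
    (hFOC : ∀ x ∈ D, fderiv ℝ F (vstar x)
        = ∑ m, Λ x m • fderiv ℝ (fun v => c v m) (vstar x)) :
    ∀ x ∈ D, ∀ i j : Fin M,
      fderiv ℝ (fun y => Λ y i) x (Pi.single j 1)
        = ∑ s, ∑ k,
            (fderiv ℝ vstar x (Pi.single i 1) s) *
            ((fderiv ℝ (fun v => fderiv ℝ F v (Pi.single k 1)) (vstar x) (Pi.single s 1))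
              - ∑ m, Λ x m *
                  fderiv ℝ (fun v => fderiv ℝ (fun u => c u m) v (Pi.single k 1)) (vstar x)
                    (Pi.single s 1)) *
            (fderiv ℝ vstar x (Pi.single j 1) k) := by
  intro x hx i j
  have hxD : D ∈ nhds x := hD.mem_nhds hx
  -- basic differentiability
  have hFd : Differentiable ℝ F := hF.differentiable (by norm_num)
  have hcd : Differentiable ℝ c := hc.differentiable (by norm_num)
  have hF'd : Differentiable ℝ (fderiv ℝ F) :=
    (hF.fderiv_right (m := 1) (by norm_num)).differentiable (by norm_num)
  have hc'd : Differentiable ℝ (fderiv ℝ c) :=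
    (hc.fderiv_right (m := 1) (by norm_num)).differentiable (by norm_num)
  have hvd : DifferentiableAt ℝ vstar x :=
    (hv.contDiffAt hxD).differentiableAt (by norm_num)
  have hΛd : DifferentiableAt ℝ Λ x :=
    (hΛ.contDiffAt hxD).differentiableAt (by norm_num)
  -- named derivatives
  set B := fderiv ℝ vstar x with hBdef
  have hB : HasFDerivAt vstar B x := hvd.hasFDerivAt
  set Λ' := fderiv ℝ Λ x with hΛ'def
  have hΛ' : HasFDerivAt Λ Λ' x := hΛd.hasFDerivAt
  set A := fderiv ℝ c (vstar x) with hAdef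
  have hA : HasFDerivAt c A (vstar x) := (hcd (vstar x)).hasFDerivAt
  set F'' := fderiv ℝ (fderiv ℝ F) (vstar x) with hF''def
  have hF'' : HasFDerivAt (fderiv ℝ F) F'' (vstar x) := (hF'd (vstar x)).hasFDerivAt
  set c'' := fderiv ℝ (fderiv ℝ c) (vstar x) with hc''def
  have hc'' : HasFDerivAt (fderiv ℝ c) c'' (vstar x) := (hc'd (vstar x)).hasFDerivAt
  -- Step A: constraint differentiation: A ∘ B = id
  have hid : HasFDerivAt (fun y => c (vstar y)) (A.comp B) x := hA.comp x hB
  have heq : (fun y => c (vstar y)) =ᶠ[nhds x] id :=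
    Filter.eventuallyEq_of_mem hxD (fun y hy => hcon y hy)
  have hid2 : HasFDerivAt (fun y => c (vstar y)) (ContinuousLinearMap.id ℝ (Fin M → ℝ)) x :=
    (hasFDerivAt_id x).congr_of_eventuallyEq heq
  have hAB : ∀ u, A (B u) = u := by
    intro u
    have h := hid.unique hid2
    calc A (B u) = (A.comp B) u := rfl
      _ = u := by rw [h]; rfl
  -- derivative of each coordinate of c
  have hprojc : ∀ (m : Fin M) (v : Fin n → ℝ),
      HasFDerivAt (fun v => c v m)
        ((ContinuousLinearMap.proj m).comp (fderiv ℝ c v)) v := by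
    intro m v
    exact (ContinuousLinearMap.proj m).hasFDerivAt.comp v (hcd v).hasFDerivAt
  -- Step B: differentiate the FOC
  have hΦ1 : HasFDerivAt (fun y => fderiv ℝ F (vstar y)) (F''.comp B) x := hF''.comp x hB
  have hΦeq : (fun y => ∑ m, Λ y m • fderiv ℝ (fun v => c v m) (vstar y)) =ᶠ[nhds x]
      (fun y => fderiv ℝ F (vstar y)) :=
    Filter.eventuallyEq_of_mem hxD (fun y hy => (hFOC y hy).symm)
  have hΦ2 : HasFDerivAt (fun y => ∑ m, Λ y m • fderiv ℝ (fun v => c v m) (vstar y))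
      (F''.comp B) x := hΦ1.congr_of_eventuallyEq hΦeq
  -- direct computation of the derivative of the sum
  have hCm : ∀ m : Fin M, HasFDerivAt (fun y => fderiv ℝ (fun v => c v m) (vstar y))
      (((ContinuousLinearMap.compL ℝ (Fin n → ℝ) (Fin M → ℝ) ℝ
          (ContinuousLinearMap.proj m)).comp (c''.comp B))) x := by
    intro m
    have h1 : HasFDerivAt (fun y => fderiv ℝ c (vstar y)) (c''.comp B) x := hc''.comp x hB
    have h2 := (ContinuousLinearMap.compL ℝ (Fin n → ℝ) (Fin M → ℝ) ℝ
        (ContinuousLinearMap.proj m)).hasFDerivAt.comp x h1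
    have h3 : (fun y => fderiv ℝ (fun v => c v m) (vstar y)) =
        (fun y => (ContinuousLinearMap.compL ℝ (Fin n → ℝ) (Fin M → ℝ) ℝ
          (ContinuousLinearMap.proj m)) (fderiv ℝ c (vstar y))) := by
      funext y
      exact (hprojc m (vstar y)).fderiv
    rw [h3]
    exact h2
  have hΛm : ∀ m : Fin M, HasFDerivAt (fun y => Λ y m)
      ((ContinuousLinearMap.proj m).comp Λ') x := by
    intro m
    exact (ContinuousLinearMap.proj m).hasFDerivAt.comp x hΛ'
  have hΦ3 : HasFDerivAt (fun y => ∑ m, Λ y m • fderiv ℝ (fun v => c v m) (vstar y))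
      (∑ m, (Λ x m • (((ContinuousLinearMap.compL ℝ (Fin n → ℝ) (Fin M → ℝ) ℝ
          (ContinuousLinearMap.proj m)).comp (c''.comp B)))
        + ((ContinuousLinearMap.proj m).comp Λ').smulRight
            (fderiv ℝ (fun v => c v m) (vstar x)))) x := by
    apply HasFDerivAt.fun_sum
    intro m _
    exact (hΛm m).smul (hCm m)
  have key := hΦ2.unique hΦ3
  -- evaluate
  have keyev : ∀ (u : Fin M → ℝ) (w : Fin n → ℝ),
      F'' (B u) w = ∑ m, (Λ x m * ((c'' (B u)) w m)
        + Λ' u m * (fderiv ℝ (fun v => c v m) (vstar x)) w) := by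
    intro u w
    have h1 := DFunLike.congr_fun (DFunLike.congr_fun key u) w
    simpa [ContinuousLinearMap.sum_apply, ContinuousLinearMap.add_apply,
      ContinuousLinearMap.smul_apply, ContinuousLinearMap.smulRight_apply,
      ContinuousLinearMap.comp_apply, ContinuousLinearMap.proj_apply,
      ContinuousLinearMap.compL_apply, smul_eq_mul, mul_comm] using h1
  -- value of fderiv (c·m) at B u
  have hCval : ∀ (m : Fin M) (u : Fin M → ℝ),
      (fderiv ℝ (fun v => c v m) (vstar x)) (B u) = u m := by
    intro m u
    rw [(hprojc m (vstar x)).fderiv]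
    have h : A (B u) = u := hAB u
    simpa [ContinuousLinearMap.comp_apply, ContinuousLinearMap.proj_apply, ← hAdef] using
      congrFun h m
  -- main scalar identity
  have main : Λ' (Pi.single j 1) i
      = F'' (B (Pi.single j 1)) (B (Pi.single i 1))
        - ∑ m, Λ x m * ((c'' (B (Pi.single j 1))) (B (Pi.single i 1)) m) := by
    have h := keyev (Pi.single j 1) (B (Pi.single i 1))
    have h2 : ∑ m, (Λ x m * ((c'' (B (Pi.single j 1))) (B (Pi.single i 1)) m)
        + Λ' (Pi.single j 1) m * (fderiv ℝ (fun v => c v m) (vstar x)) (B (Pi.single i 1)))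
        = (∑ m, Λ x m * ((c'' (B (Pi.single j 1))) (B (Pi.single i 1)) m))
          + Λ' (Pi.single j 1) i := by
      rw [Finset.sum_add_distrib]
      congr 1
      have h3 : ∀ m : Fin M, Λ' (Pi.single j 1) m
          * (fderiv ℝ (fun v => c v m) (vstar x)) (B (Pi.single i 1))
          = Λ' (Pi.single j 1) m * (Pi.single i 1 : Fin M → ℝ) m := by
        intro m; rw [hCval]
      rw [Finset.sum_congr rfl (fun m _ => h3 m)]
      simp [Pi.single_apply, mul_ite]
    rw [h2] at h
    linarith
  -- symmetry of second derivatives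
  have hFsymm : ∀ v w, F'' v w = F'' w v :=
    second_derivative_symmetric (fun y => (hFd y).hasFDerivAt) hF''
  have hcsymm : ∀ v w, c'' v w = c'' w v :=
    second_derivative_symmetric (fun y => (hcd y).hasFDerivAt) hc''
  -- identify the goal's second-derivative entries
  have hFentry : ∀ s k : Fin n,
      fderiv ℝ (fun v => fderiv ℝ F v (Pi.single k 1)) (vstar x) (Pi.single s 1)
        = F'' (Pi.single s 1) (Pi.single k 1) := by
    intro s k
    have h : HasFDerivAt (fun v => fderiv ℝ F v (Pi.single k 1))
        ((ContinuousLinearMap.apply ℝ ℝ (Pi.single k 1)).comp F'') (vstar x) := by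
      have h0 := (ContinuousLinearMap.apply ℝ ℝ
        (Pi.single k (1:ℝ) : Fin n → ℝ)).hasFDerivAt.comp (vstar x) hF''
      exact h0.congr_of_eventuallyEq (Filter.Eventually.of_forall fun v => rfl)
    rw [h.fderiv]
    rfl
  have hcentry : ∀ (m : Fin M) (s k : Fin n),
      fderiv ℝ (fun v => fderiv ℝ (fun u => c u m) v (Pi.single k 1)) (vstar x) (Pi.single s 1)
        = (c'' (Pi.single s 1)) (Pi.single k 1) m := by
    intro m s k
    have h2 : HasFDerivAt (fun v => (fderiv ℝ c v) (Pi.single k 1))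
        ((ContinuousLinearMap.apply ℝ (Fin M → ℝ) (Pi.single k 1)).comp c'') (vstar x) := by
      have h0 := (ContinuousLinearMap.apply ℝ (Fin M → ℝ)
        (Pi.single k (1:ℝ) : Fin n → ℝ)).hasFDerivAt.comp (vstar x) hc''
      exact h0.congr_of_eventuallyEq (Filter.Eventually.of_forall fun v => rfl)
    have h1 : HasFDerivAt (fun v => (fderiv ℝ c v) (Pi.single k 1) m)
        ((ContinuousLinearMap.proj m).comp
          ((ContinuousLinearMap.apply ℝ (Fin M → ℝ) (Pi.single k 1)).comp c'')) (vstar x) := by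
      have h0 := (ContinuousLinearMap.proj (R := ℝ)
        (φ := fun _ : Fin M => ℝ) m).hasFDerivAt.comp (vstar x) h2
      exact h0.congr_of_eventuallyEq (Filter.Eventually.of_forall fun v => rfl)
    have h3 : (fun v => fderiv ℝ (fun u => c u m) v (Pi.single k 1))
        = (fun v => (fderiv ℝ c v) (Pi.single k 1) m) := by
      funext v
      rw [(hprojc m v).fderiv]
      rfl
    rw [h3, h1.fderiv]
    rfl
  -- finish: expand bilinearly
  have hgoalΛ : fderiv ℝ (fun y => Λ y i) x (Pi.single j 1) = Λ' (Pi.single j 1) i := by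
    rw [(hΛm i).fderiv]
    rfl
  have hFexp : F'' (B (Pi.single i 1)) (B (Pi.single j 1))
      = ∑ s, ∑ k, (B (Pi.single i 1) s * B (Pi.single j 1) k)
          * F'' (Pi.single s 1) (Pi.single k 1) := by
    rw [bexp F'' (B (Pi.single i 1)) (B (Pi.single j 1))]
    simp [smul_eq_mul]
  have hcent : ∀ m : Fin M, (c'' (B (Pi.single i 1))) (B (Pi.single j 1)) m
      = ∑ s, ∑ k, (B (Pi.single i 1) s * B (Pi.single j 1) k)
          * ((c'' (Pi.single s 1)) (Pi.single k 1) m) := by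
    intro m
    rw [bexp c'' (B (Pi.single i 1)) (B (Pi.single j 1))]
    simp [Finset.sum_apply]
  rw [hgoalΛ, main, hFsymm (B (Pi.single j 1)) (B (Pi.single i 1))]
  simp only [hcsymm (B (Pi.single j 1)) (B (Pi.single i 1))]
  rw [hFexp]
  simp only [hcent]
  rw [habc]
  simp only [hFentry, hcentry]
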